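/- Let N ∈ ℕ, T > 0, let E : ℝ^N → ℝ be continuously differentiable, and let x : [0,T] → ℝ^N be continuously differentiable and satisfy De Giorgi's optimal energy dissipation inequality E(x(T)) + (1/2)·∫₀^T ( |x'(t)|² + |∇E(x(t))|² ) dt ≤ E(x(0)). Then x is a gradient flow of E, i.e. x'(t) = −∇E(x(t)) for every t ∈ [0,T]. -/

import Mathlib

open MeasureTheory

/-- **De Giorgi's optimal energy dissipation inequality characterizes gradient flows.**
If `E : ℝ^N → ℝ` is continuously differentiable and `x : [0,T] → ℝ^N` is continuously
differentiable and satisfies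
`E(x(T)) + (1/2)∫₀^T (|x'(t)|² + |∇E(x(t))|²) dt ≤ E(x(0))`,
then `x'(t) = -∇E(x(t))` for every `t ∈ [0,T]`. -/
theorem gradientFlow_of_deGiorgi_inequality
    {N : ℕ} (T : ℝ) (hT : 0 < T)
    (E : EuclideanSpace ℝ (Fin N) → ℝ) (hE : ContDiff ℝ 1 E)
    (x x' : ℝ → EuclideanSpace ℝ (Fin N))
    (hx : ∀ t ∈ Set.Icc (0 : ℝ) T, HasDerivAt x (x' t) t)
    (hx' : ContinuousOn x' (Set.Icc (0 : ℝ) T))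
    (hineq : E (x T) + (1 / 2) * ∫ t in (0 : ℝ)..T,
        (‖x' t‖ ^ 2 + ‖gradient E (x t)‖ ^ 2) ≤ E (x 0)) :
    ∀ t ∈ Set.Icc (0 : ℝ) T, x' t = -gradient E (x t) := by
  -- continuity facts
  have hgradc : Continuous (gradient E) := by
    have : gradient E = fun y =>
        (InnerProductSpace.toDual ℝ (EuclideanSpace ℝ (Fin N))).symm (fderiv ℝ E y) := rfl
    rw [this]
    exact (InnerProductSpace.toDual ℝ _).symm.continuous.comp
      (hE.continuous_fderiv one_ne_zero)
  have hxc : ContinuousOn x (Set.Icc (0 : ℝ) T) := fun t ht =>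
    (hx t ht).continuousAt.continuousWithinAt
  have hgc : ContinuousOn (fun t => gradient E (x t)) (Set.Icc (0 : ℝ) T) :=
    hgradc.comp_continuousOn hxc
  -- chain rule
  have hchain : ∀ t ∈ Set.Icc (0 : ℝ) T,
      HasDerivAt (fun s => E (x s)) (inner ℝ (gradient E (x t)) (x' t) : ℝ) t := by
    intro t ht
    have h1 := ((hE.differentiable one_ne_zero (x t)).hasGradientAt).hasFDerivAt
    have := h1.comp_hasDerivAt t (hx t ht)
    simp at this ⊢
    exact this
  have huIcc : Set.uIcc (0 : ℝ) T = Set.Icc 0 T := Set.uIcc_of_le hT.le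
  -- FTC
  have hinner_c : ContinuousOn (fun t => (inner ℝ (gradient E (x t)) (x' t) : ℝ))
      (Set.Icc (0 : ℝ) T) := hgc.inner hx'
  have hFTC : ∫ t in (0:ℝ)..T, (inner ℝ (gradient E (x t)) (x' t) : ℝ) =
      E (x T) - E (x 0) := by
    exact intervalIntegral.integral_eq_sub_of_hasDerivAt
      (fun t ht => hchain t (huIcc ▸ ht)) ((hinner_c.mono huIcc.le).intervalIntegrable)
  -- integrability
  have hi1 : IntervalIntegrable (fun t => ‖x' t‖ ^ 2 + ‖gradient E (x t)‖ ^ 2)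
      MeasureTheory.volume 0 T := by
    apply ContinuousOn.intervalIntegrable
    rw [huIcc]
    exact (hx'.norm.pow 2).add (hgc.norm.pow 2)
  have hi2 : IntervalIntegrable (fun t => (inner ℝ (gradient E (x t)) (x' t) : ℝ))
      MeasureTheory.volume 0 T := by
    apply ContinuousOn.intervalIntegrable
    rw [huIcc]
    exact hinner_c
  -- the nonnegative integrand
  set g : ℝ → ℝ := fun t => ‖x' t + gradient E (x t)‖ ^ 2 with hg
  have hgexp : ∀ t, g t = (‖x' t‖ ^ 2 + ‖gradient E (x t)‖ ^ 2) +
      2 * (inner ℝ (gradient E (x t)) (x' t) : ℝ) := by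
    intro t
    have := norm_add_sq_real (x' t) (gradient E (x t))
    rw [hg]
    simp only [this, real_inner_comm (x' t) (gradient E (x t))]
    ring
  have hgcont : ContinuousOn g (Set.Icc (0 : ℝ) T) :=
    ((hx'.add hgc).norm.pow 2)
  have hgi : IntervalIntegrable g MeasureTheory.volume 0 T := by
    apply ContinuousOn.intervalIntegrable
    rw [huIcc]; exact hgcont
  -- the integral of g is ≤ 0
  have hgint : ∫ t in (0:ℝ)..T, g t =
      (∫ t in (0:ℝ)..T, (‖x' t‖ ^ 2 + ‖gradient E (x t)‖ ^ 2)) +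
      2 * (E (x T) - E (x 0)) := by
    rw [← hFTC, ← intervalIntegral.integral_const_mul, ← intervalIntegral.integral_add hi1
      (hi2.const_mul 2)]
    exact intervalIntegral.integral_congr fun t _ => by rw [hgexp t]
  have hle : ∫ t in (0:ℝ)..T, g t ≤ 0 := by rw [hgint]; linarith
  have hge : 0 ≤ ∫ t in (0:ℝ)..T, g t :=
    intervalIntegral.integral_nonneg hT.le fun t _ => by positivity
  have hzero : ∫ t in (0:ℝ)..T, g t = 0 := le_antisymm hle hge
  -- conclude g = 0 on Icc
  have hae : g =ᵐ[MeasureTheory.volume.restrict (Set.Ioc (0:ℝ) T)] 0 := by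
    rw [← intervalIntegral.integral_eq_zero_iff_of_le_of_nonneg_ae hT.le
      (Filter.Eventually.of_forall fun t => by positivity) hgi]
    exact hzero
  have hae' : g =ᵐ[MeasureTheory.volume.restrict (Set.Icc (0:ℝ) T)] 0 := by
    rwa [← MeasureTheory.Measure.restrict_congr_set MeasureTheory.Ioc_ae_eq_Icc] 
  have heq : Set.EqOn g 0 (Set.Icc (0:ℝ) T) := by
    apply Measure.eqOn_of_ae_eq hae' hgcont continuousOn_const
    rw [interior_Icc, closure_Ioo hT.ne]
  intro t ht
  have : g t = 0 := heq ht
  have hnorm : ‖x' t + gradient E (x t)‖ = 0 := by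
    have := sq_eq_zero_iff.mp this
    exact this
  have := norm_eq_zero.mp hnorm
  exact eq_neg_of_add_eq_zero_left this
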